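/- Let L be the q×q lower triangular matrix over A with all diagonal entries equal to −1 and with (i,j)-entry M_{i,j} for i > j, and let U be the q×q upper triangular matrix with all diagonal entries equal to 1 and with (i,j)-entry −M_{i,j} for i < j. Then the product L·U equals the q×q matrix whose (i,j)-entry is B_{i,j} for i ≠ j and whose (i,i)-entry is B_{i,i} − C_{i,i} − 1. -/

import Mathlib

open scoped BigOperators

/-- A finite sequence of positive integers is *admissible* if between any two
occurrences of a number `s` there is an entry greater than `s`. -/
def IsAdmissible (l : List ℕ) : Prop :=
  ∀ (l₁ l₂ l₃ : List ℕ) (s : ℕ), l = l₁ ++ s :: (l₂ ++ s :: l₃) → ∃ t ∈ l₂, s < t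

/-- `Dset n` is the set of admissible sequences all of whose entries lie in
`{1, …, n-1}` (including the empty sequence). -/
def Dset (n : ℕ) : Set (List ℕ) :=
  {l | IsAdmissible l ∧ ∀ x ∈ l, 1 ≤ x ∧ x < n}

/-- The product `B i i₁ * B i₁ i₂ * ⋯ * B i_c j` along a sequence `[i₁, …, i_c]`;
the empty sequence contributes `B i j`. -/
def pathProd {A : Type*} [Ring A] (B : ℕ → ℕ → A) (i j : ℕ) : List ℕ → A
  | [] => B i j
  | a :: l => B i a * pathProd B a j l

/-- `M i j = Σ_{(i₁,…,i_c) ∈ D_{min(i,j)}} B i i₁ ⋯ B i_c j`. -/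
noncomputable def Mpoly {A : Type*} [Ring A] (B : ℕ → ℕ → A) (i j : ℕ) : A :=
  ∑ᶠ l ∈ Dset (min i j), pathProd B i j l

/-- `C i j` for `i < j` sums `B i i₁ ⋯ B i_c j` over sequences with
`(i, i₁, …, i_c) ∈ D_j`; and `C n n = M n n`. -/
noncomputable def Cpoly {A : Type*} [Ring A] (B : ℕ → ℕ → A) (i j : ℕ) : A :=
  if i = j then Mpoly B i j
  else ∑ᶠ l ∈ {l : List ℕ | (i :: l) ∈ Dset j}, pathProd B i j l

/-- The generators `B_{i,j}` of the free noncommutative unital ℤ-algebra. -/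
noncomputable def Bgen : ℕ → ℕ → FreeAlgebra ℤ (ℕ × ℕ) :=
  fun i j => FreeAlgebra.ι ℤ (i, j)

/-- The commuting indeterminates `B_{i,j}` of the polynomial ring `ℤ[B_{i,j}]`. -/
noncomputable def Bcomm : ℕ → ℕ → MvPolynomial (ℕ × ℕ) ℤ :=
  fun i j => MvPolynomial.X (i, j)

-- ==== auxiliary lemmas ====

lemma split_cons {α} {l₁ l₂ a b : List α} {k s : α} (h : l₁ ++ k :: l₂ = a ++ s :: b) :
    (∃ a₂, l₁ = a ++ s :: a₂ ∧ b = a₂ ++ k :: l₂) ∨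
    (l₁ = a ∧ k = s ∧ l₂ = b) ∨
    (∃ b₁, a = l₁ ++ k :: b₁ ∧ l₂ = b₁ ++ s :: b) := by
  rcases List.append_eq_append_iff.1 h with ⟨a', h1, h2⟩ | ⟨c', h1, h2⟩
  · cases a' with
    | nil =>
      obtain ⟨hk, hl⟩ := List.cons.injEq .. ▸ h2
      right; left; exact ⟨by simpa using h1.symm, hk, hl⟩
    | cons x b₁ =>
      obtain ⟨hk, hl⟩ := List.cons.injEq .. ▸ h2
      right; right; exact ⟨b₁, by rw [h1, hk], hl⟩
  · cases c' with
    | nil =>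
      obtain ⟨hk, hl⟩ := List.cons.injEq .. ▸ h2
      right; left; exact ⟨by simpa using h1, hk.symm, hl.symm⟩
    | cons x a₂ =>
      obtain ⟨hk, hl⟩ := List.cons.injEq .. ▸ h2
      left; exact ⟨a₂, by rw [h1, hk], by simpa using hl⟩

lemma IsAdmissible.left {l₁ l₂ : List ℕ} {k : ℕ} (h : IsAdmissible (l₁ ++ k :: l₂)) :
    IsAdmissible l₁ := by
  intro a b c s hs
  exact h a b (c ++ k :: l₂) s (by rw [hs]; simp)

lemma IsAdmissible.right {l₁ l₂ : List ℕ} {k : ℕ} (h : IsAdmissible (l₁ ++ k :: l₂)) :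
    IsAdmissible l₂ := by
  intro a b c s hs
  exact h (l₁ ++ k :: a) b c s (by rw [hs]; simp)

lemma IsAdmissible.glue {l₁ l₂ : List ℕ} {k : ℕ} (h₁ : IsAdmissible l₁) (h₂ : IsAdmissible l₂)
    (hlt : ∀ x ∈ l₁ ++ l₂, x < k) : IsAdmissible (l₁ ++ k :: l₂) := by
  intro a b c s hs
  rcases split_cons hs with ⟨a₂, ha, hb⟩ | ⟨ha, hk, hb⟩ | ⟨b₁, ha, hb⟩
  · -- l₁ = a ++ s :: a₂, b ++ s :: c = a₂ ++ k :: l₂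
    have hsl₁ : s ∈ l₁ := by rw [ha]; simp
    have hsk : s < k := hlt s (by simp [hsl₁])
    rcases split_cons hb.symm with ⟨a₃, ha₃, _⟩ | ⟨_, hk₃, _⟩ | ⟨b₂, hb₂, _⟩
    · exact h₁ a b a₃ s (by rw [ha, ha₃])
    · exact absurd (hk₃ ▸ hsk) (lt_irrefl _)
    · exact ⟨k, by rw [hb₂]; simp, hsk⟩
  · have hsl₂ : s ∈ l₂ := by rw [hb]; simp
    exact absurd (hk ▸ hlt s (by simp [hsl₂])) (lt_irrefl _)
  · exact h₂ b₁ b c s hb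

lemma mem_split_first {α} [DecidableEq α] {a : α} {l : List α} (h : a ∈ l) :
    ∃ s t, l = s ++ a :: t ∧ a ∉ s := by
  induction l with
  | nil => simp at h
  | cons x xs ih =>
    by_cases hx : a = x
    · exact ⟨[], xs, by simp [hx], by simp⟩
    · have hm : a ∈ xs := by
        rcases List.mem_cons.1 h with h' | h'
        · exact absurd h' hx
        · exact h'
      rcases ih hm with ⟨s, t, hst, hns⟩
      exact ⟨x :: s, t, by simp [hst], by simp [hx, hns]⟩

lemma maxL_mem {l : List ℕ} (h : l ≠ []) : l.foldr max 0 ∈ l := by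
  induction l with
  | nil => simp at h
  | cons x xs ih =>
    cases xs with
    | nil => simp
    | cons y ys =>
      show max x ((y :: ys).foldr max 0) ∈ _
      rcases max_cases x ((y :: ys).foldr max 0) with ⟨he, _⟩ | ⟨he, _⟩
      · rw [he]; exact List.mem_cons_self
      · rw [he]; exact List.mem_cons_of_mem _ (ih (by simp))

lemma le_maxL {l : List ℕ} {x : ℕ} (h : x ∈ l) : x ≤ l.foldr max 0 := by
  induction l with
  | nil => simp at h
  | cons y ys ih =>
    rcases List.mem_cons.1 h with h' | h'
    · simp [h', le_max_iff]
    · simp [le_max_iff, ih h']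

lemma Dset.nil_mem (n : ℕ) : ([] : List ℕ) ∈ Dset n :=
  ⟨fun l₁ _ _ _ h => absurd h (by simp), by simp⟩

lemma Dset.glue_mem {k n : ℕ} (hk1 : 1 ≤ k) (hkn : k < n) {l₁ l₂ : List ℕ}
    (h₁ : l₁ ∈ Dset k) (h₂ : l₂ ∈ Dset k) : l₁ ++ k :: l₂ ∈ Dset n := by
  refine ⟨h₁.1.glue h₂.1 ?_, ?_⟩
  · intro x hx
    rcases List.mem_append.1 hx with h | h
    · exact (h₁.2 x h).2
    · exact (h₂.2 x h).2
  · intro x hx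
    rcases List.mem_append.1 hx with h | h
    · exact ⟨(h₁.2 x h).1, lt_trans (h₁.2 x h).2 hkn⟩
    · rcases List.mem_cons.1 h with h' | h'
      · exact h' ▸ ⟨hk1, hkn⟩
      · exact ⟨(h₂.2 x h').1, lt_trans (h₂.2 x h').2 hkn⟩

lemma Dset.decomp {n : ℕ} {l : List ℕ} (hl : l ∈ Dset n) (hne : l ≠ []) :
    ∃ k l₁ l₂, 1 ≤ k ∧ k < n ∧ l = l₁ ++ k :: l₂ ∧ l₁ ∈ Dset k ∧ l₂ ∈ Dset k := by
  set k := l.foldr max 0 with hk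
  have hkl : k ∈ l := maxL_mem hne
  obtain ⟨l₁, l₂, hsplit, hnotmem⟩ := mem_split_first hkl
  have hk2 := hl.2 k hkl
  have hknl₂ : k ∉ l₂ := by
    intro hmem
    obtain ⟨u, v, huv, -⟩ := mem_split_first hmem
    obtain ⟨t, htu, hkt⟩ := hl.1 l₁ u v k (by rw [hsplit, huv])
    have : t ∈ l := by rw [hsplit, huv]; simp [htu]
    exact absurd (le_maxL this) (not_le.2 hkt)
  have hmem₁ : ∀ x ∈ l₁, 1 ≤ x ∧ x < k := by
    intro x hx
    have hxl : x ∈ l := by rw [hsplit]; simp [hx]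
    exact ⟨(hl.2 x hxl).1, lt_of_le_of_ne (le_maxL hxl) (fun he => hnotmem (he ▸ hx))⟩
  have hmem₂ : ∀ x ∈ l₂, 1 ≤ x ∧ x < k := by
    intro x hx
    have hxl : x ∈ l := by rw [hsplit]; simp [hx]
    exact ⟨(hl.2 x hxl).1, lt_of_le_of_ne (le_maxL hxl) (fun he => hknl₂ (he ▸ hx))⟩
  have hadm : IsAdmissible (l₁ ++ k :: l₂) := hsplit ▸ hl.1
  exact ⟨k, l₁, l₂, hk2.1, hk2.2, hsplit, ⟨hadm.left, hmem₁⟩, ⟨hadm.right, hmem₂⟩⟩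

lemma decomp_unique {k k' : ℕ} {l₁ l₂ m₁ m₂ : List ℕ}
    (hl₁ : ∀ x ∈ l₁, x < k) (hl₂ : ∀ x ∈ l₂, x < k)
    (hm₁ : ∀ x ∈ m₁, x < k') (hm₂ : ∀ x ∈ m₂, x < k')
    (h : l₁ ++ k :: l₂ = m₁ ++ k' :: m₂) : k = k' ∧ l₁ = m₁ ∧ l₂ = m₂ := by
  rcases split_cons h with ⟨a₂, ha, hb⟩ | ⟨ha, hk, hb⟩ | ⟨b₁, ha, hb⟩
  · have h1 : k' < k := hl₁ k' (by rw [ha]; simp)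
    have h2 : k < k' := hm₂ k (by rw [hb]; simp)
    exact absurd (lt_trans h1 h2) (lt_irrefl _)
  · exact ⟨hk, ha, hb⟩
  · have h1 : k < k' := hm₁ k (by rw [ha]; simp)
    have h2 : k' < k := hl₂ k' (by rw [hb]; simp)
    exact absurd (lt_trans h1 h2) (lt_irrefl _)

lemma Dset_eq (n : ℕ) : Dset n =
    insert [] (⋃ k ∈ Finset.Ico 1 n,
      (fun p : List ℕ × List ℕ => p.1 ++ k :: p.2) '' ((Dset k) ×ˢ (Dset k))) := by
  ext l
  constructor
  · intro hl
    by_cases hne : l = []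
    · exact Or.inl hne
    · obtain ⟨k, l₁, l₂, hk1, hkn, hs, h₁, h₂⟩ := Dset.decomp hl hne
      refine Or.inr (Set.mem_biUnion (Finset.mem_coe.2 (Finset.mem_Ico.2 ⟨hk1, hkn⟩)) ?_)
      exact ⟨(l₁, l₂), Set.mk_mem_prod h₁ h₂, hs.symm⟩
  · intro hl
    rcases hl with hl | hl
    · exact hl ▸ Dset.nil_mem n
    · obtain ⟨k, hk, ⟨p, hp, he⟩⟩ := Set.mem_iUnion₂.1 hl
      obtain ⟨hk1, hkn⟩ := Finset.mem_Ico.1 hk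
      exact he ▸ Dset.glue_mem hk1 hkn hp.1 hp.2

lemma Dset_finite (n : ℕ) : (Dset n).Finite := by
  induction n using Nat.strong_induction_on with
  | _ n ih =>
    rw [Dset_eq]
    refine Set.Finite.insert _ (Set.Finite.biUnion (Finset.finite_toSet _) ?_)
    intro k hk
    have hkn : k < n := (Finset.mem_Ico.1 hk).2
    exact ((ih k hkn).prod (ih k hkn)).image _

lemma pathProd_append {A : Type*} [Ring A] (B : ℕ → ℕ → A) (k j : ℕ) (l₂ : List ℕ) :
    ∀ (l₁ : List ℕ) (i : ℕ),
      pathProd B i j (l₁ ++ k :: l₂) = pathProd B i k l₁ * pathProd B k j l₂ := by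
  intro l₁
  induction l₁ with
  | nil => intro i; rfl
  | cons a l ih =>
    intro i
    show B i a * pathProd B a j (l ++ k :: l₂) = _
    rw [ih a, pathProd, mul_assoc]

noncomputable def Spoly {A : Type*} [Ring A] (B : ℕ → ℕ → A) (m i j : ℕ) : A :=
  ∑ᶠ l ∈ Dset m, pathProd B i j l

lemma Mpoly_eq_Spoly {A : Type*} [Ring A] (B : ℕ → ℕ → A) (i j : ℕ) :
    Mpoly B i j = Spoly B (min i j) i j := rfl

lemma Spoly_eq_sum {A : Type*} [Ring A] (B : ℕ → ℕ → A) (m i j : ℕ) :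
    Spoly B m i j = ∑ l ∈ (Dset_finite m).toFinset, pathProd B i j l := by
  rw [Spoly, ← finsum_mem_coe_finset, Set.Finite.coe_toFinset]

lemma Fset_eq (m : ℕ) : (Dset_finite m).toFinset =
    insert [] ((Finset.Ico 1 m).biUnion fun k =>
      ((Dset_finite k).toFinset ×ˢ (Dset_finite k).toFinset).image
        (fun p : List ℕ × List ℕ => p.1 ++ k :: p.2)) := by
  ext l
  simp only [Set.Finite.mem_toFinset, Finset.mem_insert, Finset.mem_biUnion,
    Finset.mem_image, Finset.mem_product]
  rw [Dset_eq m]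
  constructor
  · rintro (h | h)
    · exact Or.inl h
    · obtain ⟨k, hk, ⟨p, hp, he⟩⟩ := Set.mem_iUnion₂.1 h
      exact Or.inr ⟨k, Finset.mem_coe.1 hk, p, ⟨hp.1, hp.2⟩, he⟩
  · rintro (h | ⟨k, hk, p, ⟨hp1, hp2⟩, he⟩)
    · exact Or.inl h
    · exact Or.inr (Set.mem_biUnion (Finset.mem_coe.2 hk) ⟨p, Set.mk_mem_prod hp1 hp2, he⟩)

lemma Spoly_rec {A : Type*} [Ring A] (B : ℕ → ℕ → A) (m i j : ℕ) :
    Spoly B m i j = B i j + ∑ k ∈ Finset.Ico 1 m, Spoly B k i k * Spoly B k k j := by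
  rw [Spoly_eq_sum, Fset_eq]
  have hnil : ([] : List ℕ) ∉ (Finset.Ico 1 m).biUnion fun k =>
      ((Dset_finite k).toFinset ×ˢ (Dset_finite k).toFinset).image
        (fun p : List ℕ × List ℕ => p.1 ++ k :: p.2) := by
    simp
  have hdisj : (↑(Finset.Ico 1 m) : Set ℕ).PairwiseDisjoint fun k =>
      ((Dset_finite k).toFinset ×ˢ (Dset_finite k).toFinset).image
        (fun p : List ℕ × List ℕ => p.1 ++ k :: p.2) := by
    intro k _ k' _ hkk'
    simp only [Function.onFun]
    rw [Finset.disjoint_left]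
    rintro l hl hl'
    simp only [Finset.mem_image, Finset.mem_product, Set.Finite.mem_toFinset] at hl hl'
    obtain ⟨⟨l₁, l₂⟩, ⟨h1, h2⟩, he⟩ := hl
    obtain ⟨⟨m₁, m₂⟩, ⟨h1', h2'⟩, he'⟩ := hl'
    have := decomp_unique (fun x hx => (h1.2 x hx).2) (fun x hx => (h2.2 x hx).2)
      (fun x hx => (h1'.2 x hx).2) (fun x hx => (h2'.2 x hx).2) (by rw [he, he'])
    exact hkk' this.1
  rw [Finset.sum_insert hnil, Finset.sum_biUnion hdisj]
  congr 1
  apply Finset.sum_congr rfl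
  intro k _
  have hinj : ∀ p ∈ (Dset_finite k).toFinset ×ˢ (Dset_finite k).toFinset,
      ∀ q ∈ (Dset_finite k).toFinset ×ˢ (Dset_finite k).toFinset,
      (fun p : List ℕ × List ℕ => p.1 ++ k :: p.2) p =
        (fun p : List ℕ × List ℕ => p.1 ++ k :: p.2) q → p = q := by
    rintro ⟨l₁, l₂⟩ hp ⟨m₁, m₂⟩ hq he
    simp only [Finset.mem_product, Set.Finite.mem_toFinset] at hp hq
    have := decomp_unique (fun x hx => (hp.1.2 x hx).2) (fun x hx => (hp.2.2 x hx).2)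
      (fun x hx => (hq.1.2 x hx).2) (fun x hx => (hq.2.2 x hx).2) he
    simp [this.2.1, this.2.2]
  rw [Finset.sum_image hinj]
  rw [Spoly_eq_sum, Spoly_eq_sum, Finset.sum_mul_sum, ← Finset.sum_product']
  apply Finset.sum_congr rfl
  intro p _
  exact pathProd_append B k j p.2 p.1 i

lemma Mpoly_rec {A : Type*} [Ring A] (B : ℕ → ℕ → A) (i j : ℕ) :
    Mpoly B (i+1) (j+1) = B (i+1) (j+1) +
      ∑ k ∈ Finset.range (min i j), Mpoly B (i+1) (k+1) * Mpoly B (k+1) (j+1) := by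
  have hmin : min (i+1) (j+1) = min i j + 1 := by omega
  rw [Mpoly_eq_Spoly, hmin, Spoly_rec]
  congr 1
  rw [Finset.sum_Ico_eq_sum_range]
  simp only [Nat.add_sub_cancel]
  apply Finset.sum_congr rfl
  intro k hk
  have hk' : k < min i j := Finset.mem_range.1 hk
  have e1 : Mpoly B (i+1) (k+1) = Spoly B (k+1) (i+1) (k+1) := by
    rw [Mpoly_eq_Spoly]; congr 1; omega
  have e2 : Mpoly B (k+1) (j+1) = Spoly B (k+1) (k+1) (j+1) := by
    rw [Mpoly_eq_Spoly]; congr 1; omega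
  rw [e1, e2, show 1 + k = k + 1 from Nat.add_comm 1 k]

lemma key_sum {A : Type*} [Ring A] (B : ℕ → ℕ → A) (a b q : ℕ) (ha : a < q) (hb : b < q) :
    ∑ k ∈ Finset.range q,
      ((if a = k then (-1 : A) else if k < a then Mpoly B (a+1) (k+1) else 0) *
       (if k = b then 1 else if k < b then -Mpoly B (k+1) (b+1) else 0)) =
    if a = b then B (a+1) (a+1) - Mpoly B (a+1) (a+1) - 1 else B (a+1) (b+1) := by
  set g : ℕ → A := fun k =>
    (if a = k then (-1 : A) else if k < a then Mpoly B (a+1) (k+1) else 0) *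
    (if k = b then 1 else if k < b then -Mpoly B (k+1) (b+1) else 0) with hg
  show ∑ k ∈ Finset.range q, g k = _
  have hsub : Finset.range (min a b + 1) ⊆ Finset.range q :=
    Finset.range_subset_range.2 (by omega)
  have hzero : ∀ k ∈ Finset.range q, k ∉ Finset.range (min a b + 1) → g k = 0 := by
    intro k _ hk
    have : min a b < k := by simp only [Finset.mem_range, not_lt] at hk; omega
    rcases min_lt_iff.1 this with h | h
    · rw [hg]
      simp only [if_neg (by omega : ¬ a = k), if_neg (by omega : ¬ k < a), zero_mul]
    · rw [hg]
      simp only [if_neg (by omega : ¬ k = b), if_neg (by omega : ¬ k < b), mul_zero]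
  rw [← Finset.sum_subset hsub hzero, Finset.sum_range_succ]
  have hgsmall : ∀ k ∈ Finset.range (min a b), g k =
      -(Mpoly B (a+1) (k+1) * Mpoly B (k+1) (b+1)) := by
    intro k hk
    have hk' : k < min a b := Finset.mem_range.1 hk
    rw [hg]
    simp only [if_neg (by omega : ¬ a = k), if_pos (by omega : k < a),
      if_neg (by omega : ¬ k = b), if_pos (by omega : k < b), mul_neg]
  rw [Finset.sum_congr rfl hgsmall, Finset.sum_neg_distrib]
  have hrec := Mpoly_rec B a b
  by_cases hab : a = b
  · subst hab
    rw [if_pos rfl]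
    have hgm : g (min a a) = -1 := by rw [hg]; simp
    rw [hgm, min_self] at *
    rw [hrec]
    abel
  · rw [if_neg hab]
    have hgm : g (min a b) = Mpoly B (a+1) (b+1) := by
      rcases lt_or_gt_of_ne hab with h | h
      · rw [hg, min_eq_left h.le]
        simp [hab, h]
      · rw [hg, min_eq_right h.le]
        simp [Ne.symm hab, fun hc : a = b => hab hc, h, lt_irrefl,
          if_neg (by omega : ¬ a = b), if_pos (by omega : b < a)]
    rw [hgm, hrec]
    abel

/-- with `L` lower triangular (diagonal `−1`, entries `M_{i,j}` below) and
`U` unit upper triangular (entries `−M_{i,j}` above), the product `L·U` has entries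
`B_{i,j}` off the diagonal and `B_{i,i} − C_{i,i} − 1` on the diagonal. -/
theorem LU_eq_B_matrix (q : ℕ) (hq : 1 ≤ q)
    (L U : Matrix (Fin q) (Fin q) (FreeAlgebra ℤ (ℕ × ℕ)))
    (hL : ∀ i j : Fin q, L i j =
      if (i : ℕ) = (j : ℕ) then -1
      else if (j : ℕ) < (i : ℕ) then Mpoly Bgen ((i : ℕ) + 1) ((j : ℕ) + 1) else 0)
    (hU : ∀ i j : Fin q, U i j =
      if (i : ℕ) = (j : ℕ) then 1
      else if (i : ℕ) < (j : ℕ) then - Mpoly Bgen ((i : ℕ) + 1) ((j : ℕ) + 1) else 0) :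
    L * U = Matrix.of fun i j : Fin q =>
      if (i : ℕ) = (j : ℕ) then
        Bgen ((i : ℕ) + 1) ((i : ℕ) + 1) - Cpoly Bgen ((i : ℕ) + 1) ((i : ℕ) + 1) - 1
      else Bgen ((i : ℕ) + 1) ((j : ℕ) + 1) := by
  ext i j
  rw [Matrix.mul_apply, Matrix.of_apply]
  have h1 : ∀ k : Fin q, L i k * U k j =
      (fun k : ℕ =>
        (if (i : ℕ) = k then (-1 : FreeAlgebra ℤ (ℕ × ℕ))
          else if k < (i : ℕ) then Mpoly Bgen ((i : ℕ) + 1) (k + 1) else 0) *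
        (if k = (j : ℕ) then 1
          else if k < (j : ℕ) then -Mpoly Bgen (k + 1) ((j : ℕ) + 1) else 0)) (k : ℕ) := by
    intro k
    rw [hL, hU]
  rw [Finset.sum_congr rfl (fun k _ => h1 k),
    Fin.sum_univ_eq_sum_range (fun k : ℕ =>
        (if (i : ℕ) = k then (-1 : FreeAlgebra ℤ (ℕ × ℕ))
          else if k < (i : ℕ) then Mpoly Bgen ((i : ℕ) + 1) (k + 1) else 0) *
        (if k = (j : ℕ) then 1
          else if k < (j : ℕ) then -Mpoly Bgen (k + 1) ((j : ℕ) + 1) else 0)) q,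
    key_sum Bgen _ _ q i.isLt j.isLt]
  by_cases hij : (i : ℕ) = (j : ℕ)
  · rw [if_pos hij, if_pos hij, Cpoly, if_pos rfl]
  · rw [if_neg hij, if_neg hij]
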